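/- For a Boltzmann machine with visible and hidden units, the Hessian of f(θ) = E_target[log P_θ(X)] equals E_target[Cov_θ[S | X]] - Cov_θ[S], where S is the vector of all unit values and pairwise products of unit values, Cov_θ[S | X] is the conditional covariance matrix of S given the visible values X, and Cov_θ[S] is the unconditional covariance matrix under P_θ. -/

import Mathlib

section LSE
set_option linter.unusedSectionVars false
set_option linter.unusedVariables false

variable {E : Type*} [NormedAddCommGroup E] [NormedSpace ℝ E]
variable {ι : Type*} [Fintype ι] [Nonempty ι]

noncomputable def lseD (L : ι → E →L[ℝ] ℝ) (θ : E) : E →L[ℝ] ℝ :=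
  ∑ i, Real.exp (L i θ) • L i

lemma lseD_apply (L : ι → E →L[ℝ] ℝ) (θ w : E) :
    lseD L θ w = ∑ i, Real.exp (L i θ) * L i w := by
  simp [lseD]

lemma sumexp_pos (L : ι → E →L[ℝ] ℝ) (θ : E) : 0 < ∑ i, Real.exp (L i θ) :=
  Finset.sum_pos (fun i _ => Real.exp_pos _) Finset.univ_nonempty

lemma hasFDerivAt_sumexp (L : ι → E →L[ℝ] ℝ) (θ : E) :
    HasFDerivAt (fun θ' => ∑ i, Real.exp (L i θ')) (lseD L θ) θ :=
  HasFDerivAt.fun_sum fun i _ => (L i).hasFDerivAt.exp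

lemma hasFDerivAt_logsumexp (L : ι → E →L[ℝ] ℝ) (θ : E) :
    HasFDerivAt (fun θ' => Real.log (∑ i, Real.exp (L i θ')))
      ((∑ i, Real.exp (L i θ))⁻¹ • lseD L θ) θ :=
  (hasFDerivAt_sumexp L θ).log (sumexp_pos L θ).ne'

lemma logD_apply (L : ι → E →L[ℝ] ℝ) (θ w : E) :
    ((∑ i, Real.exp (L i θ))⁻¹ • lseD L θ) w
      = ∑ i, Real.exp (L i θ) * (∑ j, Real.exp (L j θ))⁻¹ * L i w := by
  rw [ContinuousLinearMap.smul_apply, smul_eq_mul, lseD_apply, Finset.mul_sum]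
  exact Finset.sum_congr rfl fun i _ => by ring

lemma hasFDerivAt_invsumexp (L : ι → E →L[ℝ] ℝ) (θ : E) :
    HasFDerivAt (fun θ' => (∑ i, Real.exp (L i θ'))⁻¹)
      ((-((∑ i, Real.exp (L i θ)) ^ 2)⁻¹) • lseD L θ) θ :=
  (hasDerivAt_inv (sumexp_pos L θ).ne').comp_hasFDerivAt θ (hasFDerivAt_sumexp L θ)

noncomputable def covD (L : ι → E →L[ℝ] ℝ) (s : ι → ℝ) (θ : E) : E →L[ℝ] ℝ :=
  ∑ i, s i • (Real.exp (L i θ) • ((-((∑ j, Real.exp (L j θ)) ^ 2)⁻¹) • lseD L θ)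
      + (∑ j, Real.exp (L j θ))⁻¹ • (Real.exp (L i θ) • L i))

lemma hasFDerivAt_cov (L : ι → E →L[ℝ] ℝ) (s : ι → ℝ) (θ : E) :
    HasFDerivAt (fun θ' => ∑ i, Real.exp (L i θ') * (∑ j, Real.exp (L j θ'))⁻¹ * s i)
      (covD L s θ) θ :=
  HasFDerivAt.fun_sum fun i _ =>
    ((L i).hasFDerivAt.exp.mul (hasFDerivAt_invsumexp L θ)).mul_const (s i)

lemma covD_apply (L : ι → E →L[ℝ] ℝ) (s : ι → ℝ) (θ w : E) :
    covD L s θ w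
      = (∑ i, Real.exp (L i θ) * (∑ j, Real.exp (L j θ))⁻¹ * (s i * L i w))
        - (∑ i, Real.exp (L i θ) * (∑ j, Real.exp (L j θ))⁻¹ * s i)
          * (∑ i, Real.exp (L i θ) * (∑ j, Real.exp (L j θ))⁻¹ * L i w) := by
  have hZ : (∑ j, Real.exp (L j θ)) ≠ 0 := (sumexp_pos L θ).ne'
  have h3 : (∑ i, Real.exp (L i θ) * (∑ j, Real.exp (L j θ))⁻¹ * (L i w))
      = (∑ j, Real.exp (L j θ))⁻¹ * ∑ i, Real.exp (L i θ) * (L i w) := by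
    rw [Finset.mul_sum]; exact Finset.sum_congr rfl fun i _ => by ring
  rw [h3]
  simp only [covD, ContinuousLinearMap.sum_apply, ContinuousLinearMap.add_apply,
    ContinuousLinearMap.smul_apply, lseD_apply, smul_eq_mul]
  rw [Finset.sum_mul, ← Finset.sum_sub_distrib]
  refine Finset.sum_congr rfl fun i _ => ?_
  field_simp
  ring

end LSE


/-- for a Boltzmann machine with `N` visible and `M` hidden units,
the Hessian of `f(θ) = E_target[log P_θ(X)]` equals
`E_target[Cov_θ[S | X]] - Cov_θ[S]`, where `S` is the vector of all unit values
and pairwise products of unit values.  Entries of the Hessian are formalized as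
second directional derivatives along the parameter coordinate directions. -/
theorem boltzmann_hidden_hessian (N M : ℕ)
    -- real value of each (visible or hidden) unit in a configuration
    (val : (Fin N → Bool) × (Fin M → Bool) → (Fin N ⊕ Fin M) → ℝ)
    (hval : ∀ c, (∀ i, val c (Sum.inl i) = if c.1 i then 1 else 0)
      ∧ ∀ j, val c (Sum.inr j) = if c.2 j then 1 else 0)
    (E : ((Fin N ⊕ Fin M → ℝ) × (Fin N ⊕ Fin M → Fin N ⊕ Fin M → ℝ))
          → (Fin N → Bool) × (Fin M → Bool) → ℝ)
    (hE : ∀ θ c, E θ c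
      = -(∑ u, θ.1 u * val c u) - ∑ u, ∑ v, θ.2 u v * val c u * val c v)
    (Pjoint : ((Fin N ⊕ Fin M → ℝ) × (Fin N ⊕ Fin M → Fin N ⊕ Fin M → ℝ))
          → (Fin N → Bool) × (Fin M → Bool) → ℝ)
    (hPjoint : ∀ θ c, Pjoint θ c
      = Real.exp (-(E θ c))
        / ∑ c' : (Fin N → Bool) × (Fin M → Bool), Real.exp (-(E θ c')))
    (Pmarg : ((Fin N ⊕ Fin M → ℝ) × (Fin N ⊕ Fin M → Fin N ⊕ Fin M → ℝ))
          → (Fin N → Bool) → ℝ)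
    (hPmarg : ∀ θ x, Pmarg θ x = ∑ h : Fin M → Bool, Pjoint θ (x, h))
    (Pcond : ((Fin N ⊕ Fin M → ℝ) × (Fin N ⊕ Fin M → Fin N ⊕ Fin M → ℝ))
          → (Fin N → Bool) → (Fin M → Bool) → ℝ)
    (hPcond : ∀ θ x h, Pcond θ x h = Pjoint θ (x, h) / Pmarg θ x)
    (Ptarget : (Fin N → Bool) → ℝ)
    (hnn : ∀ x, 0 ≤ Ptarget x)
    (hsum : ∑ x : Fin N → Bool, Ptarget x = 1)
    (f : ((Fin N ⊕ Fin M → ℝ) × (Fin N ⊕ Fin M → Fin N ⊕ Fin M → ℝ)) → ℝ)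
    (hf : ∀ θ, f θ = ∑ x : Fin N → Bool, Ptarget x * Real.log (Pmarg θ x))
    -- components of S: unit values and pairwise products
    (S : (Fin N → Bool) × (Fin M → Bool)
          → ((Fin N ⊕ Fin M) ⊕ ((Fin N ⊕ Fin M) × (Fin N ⊕ Fin M))) → ℝ)
    (hS : ∀ c, (∀ u, S c (Sum.inl u) = val c u)
      ∧ ∀ p : (Fin N ⊕ Fin M) × (Fin N ⊕ Fin M),
          S c (Sum.inr p) = val c p.1 * val c p.2)
    -- parameter coordinate directions corresponding to each component of S
    (d : ((Fin N ⊕ Fin M) ⊕ ((Fin N ⊕ Fin M) × (Fin N ⊕ Fin M)))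
          → (Fin N ⊕ Fin M → ℝ) × (Fin N ⊕ Fin M → Fin N ⊕ Fin M → ℝ))
    (hd : (∀ u, d (Sum.inl u) = (Pi.single u 1, 0))
      ∧ ∀ p : (Fin N ⊕ Fin M) × (Fin N ⊕ Fin M),
          d (Sum.inr p) = (0, fun u v => if u = p.1 ∧ v = p.2 then 1 else 0))
    (θ : (Fin N ⊕ Fin M → ℝ) × (Fin N ⊕ Fin M → Fin N ⊕ Fin M → ℝ))
    (a b : (Fin N ⊕ Fin M) ⊕ ((Fin N ⊕ Fin M) × (Fin N ⊕ Fin M))) :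
    fderiv ℝ (fun θ' => fderiv ℝ f θ' (d a)) θ (d b)
      = (∑ x : Fin N → Bool, Ptarget x *
          ((∑ h : Fin M → Bool, Pcond θ x h * (S (x, h) a * S (x, h) b))
            - (∑ h : Fin M → Bool, Pcond θ x h * S (x, h) a)
              * (∑ h : Fin M → Bool, Pcond θ x h * S (x, h) b)))
        - ((∑ c : (Fin N → Bool) × (Fin M → Bool), Pjoint θ c * (S c a * S c b))
            - (∑ c : (Fin N → Bool) × (Fin M → Bool), Pjoint θ c * S c a)
              * (∑ c : (Fin N → Bool) × (Fin M → Bool), Pjoint θ c * S c b)) := by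
  classical
  obtain ⟨hd1, hd2⟩ := hd
  -- the linear functional θ' ↦ -E θ' c
  set L : ((Fin N → Bool) × (Fin M → Bool)) →
      ((Fin N ⊕ Fin M → ℝ) × (Fin N ⊕ Fin M → Fin N ⊕ Fin M → ℝ)) →L[ℝ] ℝ :=
    fun c =>
      (∑ u, val c u • ((ContinuousLinearMap.proj u).comp
          (ContinuousLinearMap.fst ℝ (Fin N ⊕ Fin M → ℝ) (Fin N ⊕ Fin M → Fin N ⊕ Fin M → ℝ))))
      + ∑ u, ∑ v, (val c u * val c v) •
          ((ContinuousLinearMap.proj v).comp ((ContinuousLinearMap.proj u).comp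
            (ContinuousLinearMap.snd ℝ (Fin N ⊕ Fin M → ℝ) (Fin N ⊕ Fin M → Fin N ⊕ Fin M → ℝ))))
    with hLdef
  have hLapp : ∀ c θ', L c θ'
      = (∑ u, val c u * θ'.1 u) + ∑ u, ∑ v, val c u * val c v * θ'.2 u v := by
    intro c θ'
    simp [hLdef, ContinuousLinearMap.sum_apply, ContinuousLinearMap.proj_apply]
  have hLE : ∀ θ' c, L c θ' = -(E θ' c) := by
    intro θ' c
    rw [hE, hLapp]
    have h1 : (∑ u, val c u * θ'.1 u) = ∑ u, θ'.1 u * val c u :=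
      Finset.sum_congr rfl fun _ _ => mul_comm _ _
    have h2 : (∑ u, ∑ v, val c u * val c v * θ'.2 u v)
        = ∑ u, ∑ v, θ'.2 u v * val c u * val c v :=
      Finset.sum_congr rfl fun u _ => Finset.sum_congr rfl fun v _ => by ring
    rw [h1, h2]; ring
  have hLd : ∀ c e, L c (d e) = S c e := by
    intro c e
    obtain ⟨hS1, hS2⟩ := hS c
    cases e with
    | inl u =>
      rw [hd1 u, hLapp, hS1]
      simp [Pi.single_apply, mul_comm]
    | inr p =>
      rw [hd2 p, hLapp, hS2]
      have h1 : (∑ u, val c u * (0 : Fin N ⊕ Fin M → ℝ) u) = 0 := by simp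
      have h2 : (∑ u, ∑ v, val c u * val c v *
          (if u = p.1 ∧ v = p.2 then (1:ℝ) else 0)) = val c p.1 * val c p.2 := by
        rw [Finset.sum_eq_single p.1, Finset.sum_eq_single p.2]
        · simp
        · intro v _ hv; simp [hv]
        · simp
        · intro u _ hu
          apply Finset.sum_eq_zero
          intro v _
          simp [hu]
        · simp
      simpa [h1] using h2
  -- log of marginal in terms of sum-exp
  have hZpos : ∀ θ', (0:ℝ) < ∑ c : (Fin N → Bool) × (Fin M → Bool), Real.exp (L c θ') :=
    fun θ' => sumexp_pos L θ'
  have hZxpos : ∀ (x : Fin N → Bool) θ',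
      (0:ℝ) < ∑ h : Fin M → Bool, Real.exp (L (x, h) θ') :=
    fun x θ' => sumexp_pos (fun h => L (x, h)) θ'
  have hPjointZ : ∀ θ' c, Pjoint θ' c
      = Real.exp (L c θ') / ∑ c' : (Fin N → Bool) × (Fin M → Bool), Real.exp (L c' θ') := by
    intro θ' c
    rw [hPjoint]
    congr 1
    · rw [hLE]
    · exact Finset.sum_congr rfl fun c' _ => by rw [hLE]
  have hPmargZ : ∀ θ' x, Pmarg θ' x
      = (∑ h : Fin M → Bool, Real.exp (L (x, h) θ'))
        / ∑ c' : (Fin N → Bool) × (Fin M → Bool), Real.exp (L c' θ') := by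
    intro θ' x
    rw [hPmarg, Finset.sum_div]
    exact Finset.sum_congr rfl fun h _ => hPjointZ θ' (x, h)
  have hPcondZ : ∀ x h, Pcond θ x h
      = Real.exp (L (x, h) θ) * (∑ h' : Fin M → Bool, Real.exp (L (x, h') θ))⁻¹ := by
    intro x h
    rw [hPcond, hPjointZ, hPmargZ]
    have h1 : (∑ c' : (Fin N → Bool) × (Fin M → Bool), Real.exp (L c' θ)) ≠ 0 :=
      (hZpos θ).ne'
    have h2 : (∑ h' : Fin M → Bool, Real.exp (L (x, h') θ)) ≠ 0 := (hZxpos x θ).ne'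
    field_simp
  -- first derivative of f
  have hfeq : ∀ θ', f θ' = ∑ x : Fin N → Bool, Ptarget x *
      (Real.log (∑ h : Fin M → Bool, Real.exp (L (x, h) θ'))
        - Real.log (∑ c : (Fin N → Bool) × (Fin M → Bool), Real.exp (L c θ'))) := by
    intro θ'
    rw [hf]
    refine Finset.sum_congr rfl fun x _ => ?_
    rw [hPmargZ, Real.log_div (hZxpos x θ').ne' (hZpos θ').ne']
  have hfg : f = fun θ' => ∑ x : Fin N → Bool, Ptarget x *
      (Real.log (∑ h : Fin M → Bool, Real.exp (L (x, h) θ'))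
        - Real.log (∑ c : (Fin N → Bool) × (Fin M → Bool), Real.exp (L c θ'))) :=
    funext hfeq
  have h1 : ∀ θ', HasFDerivAt f
      (∑ x : Fin N → Bool, Ptarget x •
        (((∑ h : Fin M → Bool, Real.exp (L (x, h) θ'))⁻¹ • lseD (fun h => L (x, h)) θ')
          - ((∑ c : (Fin N → Bool) × (Fin M → Bool), Real.exp (L c θ'))⁻¹ • lseD L θ'))) θ' := by
    intro θ'
    rw [hfg]
    exact HasFDerivAt.fun_sum fun x _ =>
      ((hasFDerivAt_logsumexp (fun h => L (x, h)) θ').sub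
        (hasFDerivAt_logsumexp L θ')).const_mul (Ptarget x)
  -- the first directional derivative as an explicit function
  have hfd1 : (fun θ' => fderiv ℝ f θ' (d a))
      = fun θ' => ∑ x : Fin N → Bool, Ptarget x *
          ((∑ h : Fin M → Bool, Real.exp (L (x, h) θ')
              * (∑ j : Fin M → Bool, Real.exp (L (x, j) θ'))⁻¹ * S (x, h) a)
            - (∑ c : (Fin N → Bool) × (Fin M → Bool), Real.exp (L c θ')
              * (∑ j : (Fin N → Bool) × (Fin M → Bool), Real.exp (L j θ'))⁻¹ * S c a)) := by
    funext θ'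
    rw [(h1 θ').fderiv, ContinuousLinearMap.sum_apply]
    refine Finset.sum_congr rfl fun x _ => ?_
    rw [ContinuousLinearMap.smul_apply, ContinuousLinearMap.sub_apply, logD_apply, logD_apply,
      smul_eq_mul]
    congr 1
    congr 1
    · exact Finset.sum_congr rfl fun h _ => by rw [hLd]
    · exact Finset.sum_congr rfl fun c _ => by rw [hLd]
  rw [hfd1]
  -- second derivative
  have h2 : HasFDerivAt (fun θ' => ∑ x : Fin N → Bool, Ptarget x *
      ((∑ h : Fin M → Bool, Real.exp (L (x, h) θ')
          * (∑ j : Fin M → Bool, Real.exp (L (x, j) θ'))⁻¹ * S (x, h) a)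
        - (∑ c : (Fin N → Bool) × (Fin M → Bool), Real.exp (L c θ')
          * (∑ j : (Fin N → Bool) × (Fin M → Bool), Real.exp (L j θ'))⁻¹ * S c a)))
      (∑ x : Fin N → Bool, Ptarget x •
        (covD (fun h => L (x, h)) (fun h => S (x, h) a) θ - covD L (fun c => S c a) θ)) θ :=
    HasFDerivAt.fun_sum fun x _ =>
      ((hasFDerivAt_cov (fun h => L (x, h)) (fun h => S (x, h) a) θ).sub
        (hasFDerivAt_cov L (fun c => S c a) θ)).const_mul (Ptarget x)
  rw [h2.fderiv, ContinuousLinearMap.sum_apply]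
  -- evaluate each term
  have hterm : ∀ x : Fin N → Bool,
      (Ptarget x • (covD (fun h => L (x, h)) (fun h => S (x, h) a) θ
          - covD L (fun c => S c a) θ)) (d b)
      = Ptarget x *
          (((∑ h : Fin M → Bool, Pcond θ x h * (S (x, h) a * S (x, h) b))
            - (∑ h : Fin M → Bool, Pcond θ x h * S (x, h) a)
              * (∑ h : Fin M → Bool, Pcond θ x h * S (x, h) b))
          - ((∑ c : (Fin N → Bool) × (Fin M → Bool), Pjoint θ c * (S c a * S c b))
            - (∑ c : (Fin N → Bool) × (Fin M → Bool), Pjoint θ c * S c a)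
              * (∑ c : (Fin N → Bool) × (Fin M → Bool), Pjoint θ c * S c b))) := by
    intro x
    rw [ContinuousLinearMap.smul_apply, ContinuousLinearMap.sub_apply, covD_apply, covD_apply,
      smul_eq_mul]
    congr 1
    have ePc : ∀ (h : Fin M → Bool) (t : ℝ),
        Real.exp (L (x, h) θ) * (∑ j : Fin M → Bool, Real.exp (L (x, j) θ))⁻¹ * t
          = Pcond θ x h * t := by
      intro h t; rw [hPcondZ]
    have ePj : ∀ (c : (Fin N → Bool) × (Fin M → Bool)) (t : ℝ),
        Real.exp (L c θ) * (∑ j : (Fin N → Bool) × (Fin M → Bool), Real.exp (L j θ))⁻¹ * t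
          = Pjoint θ c * t := by
      intro c t; rw [hPjointZ, div_eq_mul_inv]
    congr 1
    · congr 1
      · exact Finset.sum_congr rfl fun h _ => by
          rw [hLd, ePc]
      · congr 1
        · exact Finset.sum_congr rfl fun h _ => ePc h _
        · exact Finset.sum_congr rfl fun h _ => by rw [hLd, ePc]
    · congr 1
      · exact Finset.sum_congr rfl fun c _ => by rw [hLd, ePj]
      · congr 1
        · exact Finset.sum_congr rfl fun c _ => ePj c _
        · exact Finset.sum_congr rfl fun c _ => by rw [hLd, ePj]
  rw [Finset.sum_congr rfl fun x _ => hterm x]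
  -- final algebra using ∑ Ptarget = 1
  have final : ∀ (g : (Fin N → Bool) → ℝ) (cst : ℝ),
      (∑ x : Fin N → Bool, Ptarget x * (g x - cst))
        = (∑ x : Fin N → Bool, Ptarget x * g x) - cst := by
    intro g cst
    calc (∑ x : Fin N → Bool, Ptarget x * (g x - cst))
        = ∑ x : Fin N → Bool, (Ptarget x * g x - Ptarget x * cst) :=
          Finset.sum_congr rfl fun x _ => mul_sub _ _ _
      _ = (∑ x : Fin N → Bool, Ptarget x * g x)
            - (∑ x : Fin N → Bool, Ptarget x) * cst := by
          rw [Finset.sum_sub_distrib, Finset.sum_mul]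
      _ = _ := by rw [hsum, one_mul]
  exact final _ _
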